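/- (Necessary-condition content of Lemma 3.15 comparing the patch model with the classical AF model.) Let α ∈ (0,1) and ε1, ε2, δ1, δ2, k2, k4, ξ > 0 with ε2 > αδ2, ε1 > α(δ1+k2), and ε1ξ/(1+αξ) < δ1 + k2 (so s := ε1ξ/(1+αξ) − δ1 − k2 < 0). Set Q̃ = δ2 + k4 + k2k4/s. If Q̃ < δ2 + ξ(αδ2 − ε2), then ξ > (k4(ε1 − αδ1) + (δ1 + k2)(αδ2 − ε2)) / ((ε1 − α(δ1+k2))·(αδ2 − ε2)). -/

import Mathlib

/-- Necessary-condition content of Lemma 3.15: if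
`Q̃ < δ2 + ξ(αδ2 − ε2)` (the condition for the patch model to beat the
classical AF model), then
`ξ > (k4(ε1 − αδ1) + (δ1 + k2)(αδ2 − ε2)) / ((ε1 − α(δ1+k2))(αδ2 − ε2))`. -/
theorem patch_beats_classical_AF_necessary_condition
    (α ε1 ε2 δ1 δ2 k2 k4 ξ : ℝ)
    (hα : 0 < α ∧ α < 1)
    (hε1 : 0 < ε1) (hε2 : 0 < ε2)
    (hδ1 : 0 < δ1) (hδ2 : 0 < δ2)
    (hk2 : 0 < k2) (hk4 : 0 < k4) (hξ : 0 < ξ)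
    (hε2αδ2 : ε2 > α * δ2)
    (hε1αδ1k2 : ε1 > α * (δ1 + k2))
    (hsneg : ε1 * ξ / (1 + α * ξ) < δ1 + k2)
    (Qt : ℝ)
    (hQt : Qt = δ2 + k4 + k2 * k4 / (ε1 * ξ / (1 + α * ξ) - δ1 - k2))
    (hcond : Qt < δ2 + ξ * (α * δ2 - ε2)) :
    ξ > (k4 * (ε1 - α * δ1) + (δ1 + k2) * (α * δ2 - ε2)) /
        ((ε1 - α * (δ1 + k2)) * (α * δ2 - ε2)) := by
  obtain ⟨hα0, hα1⟩ := hα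
  have hu : (0:ℝ) < 1 + α * ξ := by positivity
  set s : ℝ := ε1 * ξ / (1 + α * ξ) - δ1 - k2 with hsdef
  have hs : s < 0 := by simp only [hsdef]; linarith
  have hsne : s ≠ 0 := ne_of_lt hs
  have h0 : k4 + k2 * k4 / s < ξ * (α * δ2 - ε2) := by
    rw [hQt] at hcond; linarith
  have h1 : ξ * (α * δ2 - ε2) * s < k4 * s + k2 * k4 := by
    have := mul_lt_mul_of_neg_right h0 hs
    rw [add_mul, div_mul_cancel₀ _ hsne] at this
    linarith
  have h2 : s * (1 + α * ξ) = ε1 * ξ - (δ1 + k2) * (1 + α * ξ) := by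
    rw [hsdef, sub_sub, sub_mul, div_mul_cancel₀ _ hu.ne']
  -- multiply h1 by (1 + αξ) > 0
  have h3 : ξ * (α * δ2 - ε2) * (s * (1 + α * ξ)) <
      k4 * (s * (1 + α * ξ)) + k2 * k4 * (1 + α * ξ) := by
    nlinarith [mul_lt_mul_of_pos_right h1 hu]
  rw [h2] at h3
  have hD : (ε1 - α * (δ1 + k2)) * (α * δ2 - ε2) < 0 := by
    apply mul_neg_of_pos_of_neg <;> linarith
  rw [gt_iff_lt, div_lt_iff_of_neg hD]
  nlinarith [h3, mul_pos hk4 hδ1, hξ]
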